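/- (GCES satisfies LIN.) For every probabilistic database p over D, all Boolean queries Q, Q' : Finset D → {0,1}, and every tuple τ ∈ D: CE(p, Q∨Q', τ) + CE(p, Q∧Q', τ) = CE(p,Q,τ) + CE(p,Q',τ), where (Q∨Q')[W] := max(Q[W],Q'[W]) and (Q∧Q')[W] := min(Q[W],Q'[W]). -/
import Mathlib

open Finset

variable {α : Type*} [DecidableEq α]

/-- The positively intervened distribution `p^{+τ}`:
`p^{+τ}(W) = Σ_{W' ⊆ D, W' ∪ {τ} = W} p(W')`. -/
noncomputable def pPlus (D : Finset α) (p : Finset α → ℝ) (τ : α) (W : Finset α) : ℝ :=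
  ∑ W' ∈ D.powerset.filter (fun W' => W' ∪ {τ} = W), p W'

/-- The negatively intervened distribution `p^{−τ}`:
`p^{−τ}(W) = Σ_{W' ⊆ D, W' \ {τ} = W} p(W')`. -/
noncomputable def pMinus (D : Finset α) (p : Finset α → ℝ) (τ : α) (W : Finset α) : ℝ :=
  ∑ W' ∈ D.powerset.filter (fun W' => W' \ {τ} = W), p W'

/-- The generalized causal-effect score of tuple `τ` for query `Q` on the PDB `p` over `D`:
`CE(p,Q,τ) = Σ_{W ⊆ D} p^{+τ}(W)·Q[W] − Σ_{W ⊆ D} p^{−τ}(W)·Q[W]`. -/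
noncomputable def CE (D : Finset α) (p : Finset α → ℝ) (Q : Finset α → ℝ) (τ : α) : ℝ :=
  ∑ W ∈ D.powerset, pPlus D p τ W * Q W - ∑ W ∈ D.powerset, pMinus D p τ W * Q W

/-- `Δ(Q,W,τ) = Q[W ∪ D^ex ∪ {τ}] − Q[W ∪ D^ex]`. -/
noncomputable def Delta (Dex : Finset α) (Q : Finset α → ℝ) (W : Finset α) (τ : α) : ℝ :=
  Q (W ∪ Dex ∪ {τ}) - Q (W ∪ Dex)

/-- (GCES satisfies LIN.) For any PDB `p` over `D`, Boolean queries `Q, Q'`, and any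
tuple `τ ∈ D`: `CE(p,Q∨Q',τ) + CE(p,Q∧Q',τ) = CE(p,Q,τ) + CE(p,Q',τ)`, where
`(Q∨Q')[W] = max(Q[W],Q'[W])` and `(Q∧Q')[W] = min(Q[W],Q'[W])`. -/
theorem stmt6 (D : Finset α)
    (p : Finset α → ℝ)
    (hp0 : ∀ W ∈ D.powerset, 0 ≤ p W)
    (hp1 : ∑ W ∈ D.powerset, p W = 1)
    (Q Q' : Finset α → ℝ)
    (hBool : ∀ W ⊆ D, Q W = 0 ∨ Q W = 1)
    (hBool' : ∀ W ⊆ D, Q' W = 0 ∨ Q' W = 1)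
    (τ : α) (hτ : τ ∈ D) :
    CE D p (fun W => max (Q W) (Q' W)) τ + CE D p (fun W => min (Q W) (Q' W)) τ =
      CE D p Q τ + CE D p Q' τ := by
  have key : ∀ f : Finset α → ℝ,
      ∑ W ∈ D.powerset, f W * max (Q W) (Q' W) + ∑ W ∈ D.powerset, f W * min (Q W) (Q' W) =
        ∑ W ∈ D.powerset, f W * Q W + ∑ W ∈ D.powerset, f W * Q' W := by
    intro f
    rw [← Finset.sum_add_distrib, ← Finset.sum_add_distrib]
    apply Finset.sum_congr rfl
    intro W _
    rw [← mul_add, ← mul_add, max_add_min]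
  have h1 := key (pPlus D p τ)
  have h2 := key (pMinus D p τ)
  simp only [CE]
  linarith
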